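/- The direct sum of k-1 three-point lines is a rank-(2k-2) real-representable matroid with no elementary rank-k flat; hence the bound 2k-1 in the Bonnice–Edelstein result is best possible. -/

import Mathlib

open Set Matroid

namespace SG

variable {α : Type*}

/-- The rank of a set in a matroid: the supremum of sizes of independent subsets. -/
noncomputable def rk (M : Matroid α) (X : Set α) : ℕ :=
  sSup (Set.ncard '' {I | M.Indep I ∧ I ⊆ X})

/-- The rank of a matroid. -/
noncomputable def rank (M : Matroid α) : ℕ := rk M M.E

/-- `F` is a rank-`k` flat of `M`. -/
def IsRkFlat (M : Matroid α) (k : ℕ) (F : Set α) : Prop := M.IsFlat F ∧ rk M F = k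

/-- A matroid is loopless if every element has rank one. -/
def Loopless (M : Matroid α) : Prop := ∀ e ∈ M.E, rk M {e} = 1

/-- A matroid is simple if it has no loops and no parallel pairs. -/
def Simple (M : Matroid α) : Prop :=
  Loopless M ∧ ∀ e ∈ M.E, ∀ f ∈ M.E, rk M {e, f} ≤ 1 → e = f

/-- `M` is representable over the field `𝔽`. -/
def Representable (𝔽 : Type) [Field 𝔽] (M : Matroid α) : Prop :=
  ∃ φ : α → (α →₀ 𝔽), ∀ I ⊆ M.E,
    (M.Indep I ↔ LinearIndependent 𝔽 (fun x : I => φ x.1))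

/-- The contraction `M/C`, defined by duality: `M/C = (M✶ ＼ C)✶`. -/
noncomputable def contract (M : Matroid α) (C : Set α) : Matroid α :=
  (M✶ ↾ (M.E \ C))✶

/-- `F` is an ordinary rank-`k` flat: the direct sum of a point and a rank-`(k-1)` flat. -/
def OrdinaryFlat (M : Matroid α) (k : ℕ) (F : Set α) : Prop :=
  IsRkFlat M k F ∧ ∃ P F₁, IsRkFlat M 1 P ∧ IsRkFlat M (k-1) F₁ ∧
    F = P ∪ F₁ ∧ rk M F = rk M P + rk M F₁

/-- `F` is an elementary rank-`k` flat: a rank-`k` flat with exactly `k` elements. -/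
def ElementaryFlat (M : Matroid α) (k : ℕ) (F : Set α) : Prop :=
  IsRkFlat M k F ∧ F.ncard = k

/-- A three-point line: a simple rank-2 matroid on three elements (i.e. `U_{2,3}`). -/
def IsThreePointLine (M : Matroid α) : Prop :=
  M.E.ncard = 3 ∧ Simple M ∧ rank M = 2

/-- The ternary affine plane AG(2,3): a simple rank-3 matroid on nine points
in which every line has exactly three points. -/
def IsAG23 (M : Matroid α) : Prop :=
  M.E.ncard = 9 ∧ Simple M ∧ rank M = 3 ∧ ∀ L, IsRkFlat M 2 L → L.ncard = 3




lemma rk_eq_ncard_of_basis' {M : Matroid α} {I X : Set α} (hX : X.Finite)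
    (hI : M.IsBasis' I X) : rk M X = I.ncard := by
  have hmem : I.ncard ∈ Set.ncard '' {J | M.Indep J ∧ J ⊆ X} :=
    ⟨I, ⟨hI.indep, hI.subset⟩, rfl⟩
  have hub : ∀ n ∈ Set.ncard '' {J | M.Indep J ∧ J ⊆ X}, n ≤ I.ncard := by
    rintro n ⟨J, ⟨hJind, hJX⟩, rfl⟩
    obtain ⟨K, hK, hJK⟩ := hJind.subset_isBasis'_of_subset hJX
    have hKfin : K.Finite := hX.subset hK.subset
    have : K.ncard = I.ncard := by
      have := hK.encard_eq_encard hI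
      simp [Set.ncard_def, this]
    exact (Set.ncard_le_ncard hJK hKfin).trans this.le
  exact le_antisymm (csSup_le ⟨_, hmem⟩ hub) (le_csSup ⟨_, hub⟩ hmem)

section TPL

variable {M : Matroid α} (hM : IsThreePointLine M)
include hM

lemma tpl_ground_finite : M.E.Finite := by
  by_contra h
  have := Set.Infinite.ncard h
  rw [hM.1] at this; omega

lemma tpl_base_ncard {B : Set α} (hB : M.IsBase B) : B.ncard = 2 := by
  have h := rk_eq_ncard_of_basis' (tpl_ground_finite hM) hB.isBasis_ground.isBasis'
  rw [← h]; exact hM.2.2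

lemma tpl_indep_ncard_le_two {I : Set α} (hI : M.Indep I) : I.ncard ≤ 2 := by
  obtain ⟨B, hB, hIB⟩ := hI.exists_isBase_superset
  have hBfin : B.Finite := (tpl_ground_finite hM).subset hB.subset_ground
  exact (Set.ncard_le_ncard hIB hBfin).trans_eq (tpl_base_ncard hM hB)

lemma tpl_indep_of_subset_ncard_le_two {I : Set α} (hIE : I ⊆ M.E) (hcard : I.ncard ≤ 2) :
    M.Indep I := by
  have hIfin : I.Finite := (tpl_ground_finite hM).subset hIE
  interval_cases h : I.ncard
  · rw [(Set.ncard_eq_zero hIfin).mp h]; exact M.empty_indep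
  · obtain ⟨e, rfl⟩ := Set.ncard_eq_one.mp h
    have he : e ∈ M.E := hIE rfl
    obtain ⟨J, hJ⟩ := M.exists_isBasis' {e}
    have h1 : J.ncard = 1 := by
      have := rk_eq_ncard_of_basis' (Set.finite_singleton e) hJ
      rw [← this]; exact hM.2.1.1 e he
    have : J = {e} := Set.eq_of_subset_of_ncard_le hJ.subset (by omega)
      (Set.finite_singleton e)
    exact this ▸ hJ.indep
  · obtain ⟨e, f, hef, rfl⟩ := Set.ncard_eq_two.mp h
    have he : e ∈ M.E := hIE (by simp)
    have hf : f ∈ M.E := hIE (by simp)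
    obtain ⟨J, hJ⟩ := M.exists_isBasis' {e, f}
    have hfin : ({e, f} : Set α).Finite := (Set.finite_singleton f).insert e
    have h2 : 2 ≤ J.ncard := by
      have hr := rk_eq_ncard_of_basis' hfin hJ
      by_contra hlt
      exact hef (hM.2.1.2 e he f hf (by rw [hr]; omega))
    have : J = {e, f} := Set.eq_of_subset_of_ncard_le hJ.subset (by omega) hfin
    exact this ▸ hJ.indep

lemma tpl_base_of_indep_ncard_two {I : Set α} (hI : M.Indep I) (h2 : I.ncard = 2) :
    M.IsBase I := by
  obtain ⟨B, hB, hIB⟩ := hI.exists_isBase_superset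
  have hBfin : B.Finite := (tpl_ground_finite hM).subset hB.subset_ground
  have : I = B := Set.eq_of_subset_of_ncard_le hIB (by rw [tpl_base_ncard hM hB, h2]) hBfin
  exact this ▸ hB

end TPL

lemma preimage_mk_iUnion_image {ι β : Type*} (s : ι → Set β) (i : ι) :
    Prod.mk i ⁻¹' (⋃ j, Prod.mk j '' s j) = s i := by
  ext t
  simp only [Set.mem_preimage, Set.mem_iUnion, Set.mem_image, Prod.mk.injEq]
  constructor
  · rintro ⟨j, u, hu, rfl, rfl⟩; exact hu
  · exact fun h => ⟨i, t, h, rfl, rfl⟩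

lemma ncard_iUnion_image_mk {ι β : Type*} [Fintype ι] (B : ι → Set β)
    (hB : ∀ i, (B i).Finite) :
    (⋃ i, Prod.mk i '' B i).ncard = ∑ i, (B i).ncard := by
  classical
  have hset : (⋃ i, Prod.mk i '' B i) =
      ↑(Finset.univ.biUnion fun i => (hB i).toFinset.image (Prod.mk i)) := by
    ext x
    simp [Set.mem_iUnion]
  rw [hset, Set.ncard_coe_finset, Finset.card_biUnion]
  · refine Finset.sum_congr rfl fun i _ => ?_
    rw [Finset.card_image_of_injective _
      (fun x y h => by injection h : Function.Injective (Prod.mk i))]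
    exact (Set.ncard_eq_toFinset_card _ (hB i)).symm
  · intro x _ y _ hxy
    simp only [Finset.disjoint_left, Finset.mem_image]
    rintro p ⟨u, hu, rfl⟩ ⟨v, hv, h⟩
    exact hxy (by injection h with h1 _; exact h1.symm)

lemma mem_blocks {ι β : Type*} {L : ι → Matroid β} {x : ι × β}
    (hx : x ∈ (Matroid.sum' L).E) : x.2 ∈ (L x.1).E := by
  rw [Matroid.sum'_ground_eq] at hx
  obtain ⟨j, u, hu, h⟩ := by simpa only [Set.mem_iUnion, Set.mem_image] using hx
  obtain ⟨rfl, rfl⟩ : j = x.1 ∧ u = x.2 := by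
    constructor <;> (cases h; rfl)
  exact hu

/-- Representability of the direct sum of three-point lines. -/
lemma rep_aux {ι β : Type*} [Fintype ι] (L : ι → Matroid β)
    (hL : ∀ i, IsThreePointLine (L i)) : Representable ℝ (Matroid.sum' L) := by
  classical
  choose a b c hab hac hbc hE using fun i => Set.ncard_eq_three.mp (hL i).1
  set φ : ι × β → (ι × β →₀ ℝ) := fun x =>
    if x.2 = c x.1 then Finsupp.single (x.1, a x.1) 1 + Finsupp.single (x.1, b x.1) 1
    else Finsupp.single x 1 with hφ
  refine ⟨φ, fun I hIE => ?_⟩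
  -- value of φ at the two "basis" coordinates of each block
  have hval_a : ∀ x : ι × β, ∀ j,
      (φ x) (j, a j) = if x = (j, a j) ∨ x = (j, c j) then 1 else 0 := by
    rintro ⟨i0, t0⟩ j
    by_cases hc : t0 = c i0
    · subst hc
      simp only [hφ, if_pos rfl, Finsupp.add_apply, Finsupp.single_apply]
      by_cases hij : i0 = j
      · subst hij
        simp [Prod.ext_iff, (hab i0).symm, (hac i0).symm, (hbc i0).symm]
      · simp [Prod.ext_iff, hij]
    · simp only [hφ, if_neg hc, Finsupp.single_apply]
      have hnc : ¬((i0, t0) = (j, c j)) := by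
        rintro h
        rw [Prod.mk.injEq] at h
        exact hc (by rw [h.2, h.1])
      simp [hnc]
  have hval_b : ∀ x : ι × β, ∀ j,
      (φ x) (j, b j) = if x = (j, b j) ∨ x = (j, c j) then 1 else 0 := by
    rintro ⟨i0, t0⟩ j
    by_cases hc : t0 = c i0
    · subst hc
      simp only [hφ, if_pos rfl, Finsupp.add_apply, Finsupp.single_apply]
      by_cases hij : i0 = j
      · subst hij
        simp [Prod.ext_iff, (hab i0).symm, (hac i0).symm, (hbc i0).symm, hab i0]
      · simp [Prod.ext_iff, hij]
    · simp only [hφ, if_neg hc, Finsupp.single_apply]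
      have hnc : ¬((i0, t0) = (j, c j)) := by
        rintro h
        rw [Prod.mk.injEq] at h
        exact hc (by rw [h.2, h.1])
      simp [hnc]
  constructor
  · -- independent → linearly independent
    intro hInd
    rw [linearIndependent_iff']
    intro s g hsum x₀ hx₀
    set S : Finset (ι × β) := s.image Subtype.val with hS
    set G : ι × β → ℝ := fun z => if hz : z ∈ I then g ⟨z, hz⟩ else 0 with hG
    have hSI : ∀ z ∈ S, z ∈ I := by
      intro z hz
      obtain ⟨x, _, rfl⟩ := Finset.mem_image.mp hz
      exact x.2
    have hGg : ∀ x : I, G ↑x = g x := fun x => by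
      rw [hG]; simp only [dif_pos x.2]
    have hsum' : ∀ y, (∑ z ∈ S, G z * (φ z) y) = 0 := by
      intro y
      have h1 : (∑ z ∈ S, G z • φ z) = 0 := by
        rw [hS, Finset.sum_image (fun x _ y _ h => Subtype.ext h)]
        rw [← hsum]
        exact Finset.sum_congr rfl fun x _ => by rw [hGg]
      calc (∑ z ∈ S, G z * (φ z) y) = (∑ z ∈ S, G z • φ z) y := by
            rw [Finsupp.finset_sum_apply]
            exact Finset.sum_congr rfl fun z _ => by
              rw [Finsupp.smul_apply, smul_eq_mul]
          _ = 0 := by rw [h1]; rfl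
    -- the two key coordinate equations for a block i
    have key : ∀ i : ι,
        ((if (i, a i) ∈ S then G (i, a i) else 0) + (if (i, c i) ∈ S then G (i, c i) else 0) = 0)
        ∧ ((if (i, b i) ∈ S then G (i, b i) else 0)
            + (if (i, c i) ∈ S then G (i, c i) else 0) = 0) := by
      intro i
      constructor
      · have h := hsum' (i, a i)
        rw [Finset.sum_congr rfl (fun z _ => by
          rw [hval_a z i, mul_ite, mul_one, mul_zero])] at h
        have hsplit : ∀ z : ι × β,
            (if z = (i, a i) ∨ z = (i, c i) then G z else 0)
            = (if z = (i, a i) then G z else 0) + (if z = (i, c i) then G z else 0) := by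
          intro z
          by_cases h1 : z = (i, a i)
          · have h2 : z ≠ (i, c i) := by
              rintro rfl
              exact hac i (by injection h1 with _ h; exact h.symm)
            simp [h1, h2, hac i, Ne.symm (hac i)]
          · by_cases h2 : z = (i, c i) <;> simp [h1, h2, hac i, Ne.symm (hac i)]
        rw [Finset.sum_congr rfl (fun z _ => hsplit z), Finset.sum_add_distrib,
          Finset.sum_ite_eq' S (i, a i) G, Finset.sum_ite_eq' S (i, c i) G] at h
        exact h
      · have h := hsum' (i, b i)
        rw [Finset.sum_congr rfl (fun z _ => by
          rw [hval_b z i, mul_ite, mul_one, mul_zero])] at h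
        have hsplit : ∀ z : ι × β,
            (if z = (i, b i) ∨ z = (i, c i) then G z else 0)
            = (if z = (i, b i) then G z else 0) + (if z = (i, c i) then G z else 0) := by
          intro z
          by_cases h1 : z = (i, b i)
          · have h2 : z ≠ (i, c i) := by
              rintro rfl
              exact hbc i (by injection h1 with _ h; exact h.symm)
            simp [h1, h2, hbc i, Ne.symm (hbc i)]
          · by_cases h2 : z = (i, c i) <;> simp [h1, h2, hbc i, Ne.symm (hbc i)]
        rw [Finset.sum_congr rfl (fun z _ => hsplit z), Finset.sum_add_distrib,
          Finset.sum_ite_eq' S (i, b i) G, Finset.sum_ite_eq' S (i, c i) G] at h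
        exact h
    -- no block of I contains all three points
    have hnot3 : ∀ i : ι, ¬((i, a i) ∈ I ∧ (i, b i) ∈ I ∧ (i, c i) ∈ I) := by
      rintro i ⟨h1, h2, h3⟩
      have hIi : (L i).Indep (Prod.mk i ⁻¹' I) := (Matroid.sum'_indep_iff.mp hInd) i
      have hsub : (L i).E ⊆ Prod.mk i ⁻¹' I := by
        rw [hE i]
        rintro t (rfl | rfl | rfl) <;> assumption
      have h3' : 3 ≤ (Prod.mk i ⁻¹' I).ncard := by
        rw [← (hL i).1]
        exact Set.ncard_le_ncard hsub ((tpl_ground_finite (hL i)).subset hIi.subset_ground)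
      have := tpl_indep_ncard_le_two (hL i) hIi
      omega
    -- finish the case analysis
    set i := (↑x₀ : ι × β).1 with hi
    have hx₀S : (↑x₀ : ι × β) ∈ S := Finset.mem_image_of_mem _ hx₀
    have hx₀E : (↑x₀ : ι × β).2 ∈ (L i).E := mem_blocks (hIE x₀.2)
    rw [← hGg x₀]
    have hx₀eq : (↑x₀ : ι × β) = (i, (↑x₀ : ι × β).2) := rfl
    have hmem3 : (↑x₀ : ι × β).2 = a i ∨ (↑x₀ : ι × β).2 = b i ∨ (↑x₀ : ι × β).2 = c i := by
      have := hE i ▸ hx₀E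
      simpa using this
    obtain ⟨hA, hB⟩ := key i
    rcases hmem3 with h | h | h
    · have hxu : (↑x₀ : ι × β) = (i, a i) := by rw [hx₀eq, h]
      rw [hxu] at hx₀S ⊢
      rw [if_pos hx₀S] at hA
      by_cases hw : (i, c i) ∈ S
      · have hv : (i, b i) ∉ S := fun hv =>
          hnot3 i ⟨hSI _ hx₀S, hSI _ hv, hSI _ hw⟩
        rw [if_neg hv, if_pos hw] at hB
        rw [if_pos hw] at hA
        linarith
      · rw [if_neg hw] at hA; linarith
    · have hxv : (↑x₀ : ι × β) = (i, b i) := by rw [hx₀eq, h]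
      rw [hxv] at hx₀S ⊢
      rw [if_pos hx₀S] at hB
      by_cases hw : (i, c i) ∈ S
      · have hu : (i, a i) ∉ S := fun hu =>
          hnot3 i ⟨hSI _ hu, hSI _ hx₀S, hSI _ hw⟩
        rw [if_neg hu, if_pos hw] at hA
        rw [if_pos hw] at hB
        linarith
      · rw [if_neg hw] at hB; linarith
    · have hxw : (↑x₀ : ι × β) = (i, c i) := by rw [hx₀eq, h]
      rw [hxw] at hx₀S ⊢
      have : (i, a i) ∉ I ∨ (i, b i) ∉ I := by
        by_contra hcon
        push_neg at hcon
        exact hnot3 i ⟨hcon.1, hcon.2, hSI _ hx₀S⟩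
      rcases this with hu | hv
      · have hu' : (i, a i) ∉ S := fun hh => hu (hSI _ hh)
        rw [if_neg hu', if_pos hx₀S] at hA
        linarith
      · have hv' : (i, b i) ∉ S := fun hh => hv (hSI _ hh)
        rw [if_neg hv', if_pos hx₀S] at hB
        linarith
  · -- linearly independent → independent
    intro hLI
    rw [Matroid.sum'_indep_iff]
    intro i
    have hIiE : Prod.mk i ⁻¹' I ⊆ (L i).E := fun t ht => mem_blocks (hIE ht)
    refine tpl_indep_of_subset_ncard_le_two (hL i) hIiE ?_
    by_contra h3
    push_neg at h3
    have hEfin : (L i).E.Finite := tpl_ground_finite (hL i)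
    have hle : (Prod.mk i ⁻¹' I).ncard ≤ 3 := (hL i).1 ▸ Set.ncard_le_ncard hIiE hEfin
    have heq : Prod.mk i ⁻¹' I = (L i).E :=
      Set.eq_of_subset_of_ncard_le hIiE (by rw [(hL i).1]; omega) hEfin
    have hai : (i, a i) ∈ I := by
      have : a i ∈ Prod.mk i ⁻¹' I := heq ▸ (hE i ▸ (by simp : a i ∈ ({a i, b i, c i} : Set β)))
      exact this
    have hbi : (i, b i) ∈ I := by
      have : b i ∈ Prod.mk i ⁻¹' I := heq ▸ (hE i ▸ (by simp : b i ∈ ({a i, b i, c i} : Set β)))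
      exact this
    have hci : (i, c i) ∈ I := by
      have : c i ∈ Prod.mk i ⁻¹' I := heq ▸ (hE i ▸ (by simp : c i ∈ ({a i, b i, c i} : Set β)))
      exact this
    have h1 : ((i, a i) : ι × β) ≠ (i, c i) := by simp [Prod.ext_iff, hac i]
    have h2 : ((i, b i) : ι × β) ≠ (i, c i) := by simp [Prod.ext_iff, hbc i]
    have hpq : (⟨(i, a i), hai⟩ : I) ≠ ⟨(i, b i), hbi⟩ := by
      simp [Subtype.ext_iff, Prod.ext_iff, hab i]
    have hpr : (⟨(i, a i), hai⟩ : I) ≠ ⟨(i, c i), hci⟩ := by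
      simp [Subtype.ext_iff, Prod.ext_iff, hac i]
    have hqr : (⟨(i, b i), hbi⟩ : I) ≠ ⟨(i, c i), hci⟩ := by
      simp [Subtype.ext_iff, Prod.ext_iff, hbc i]
    have key := linearIndependent_iff'.mp hLI
      ({⟨(i, a i), hai⟩, ⟨(i, b i), hbi⟩, ⟨(i, c i), hci⟩} : Finset I)
      (fun x => if (↑x : ι × β) = (i, c i) then -1 else 1) ?_ ⟨(i, a i), hai⟩ (by simp)
    · simp only [h1, if_false, reduceIte] at key
      simp [h1] at key
    · rw [Finset.sum_insert (by simp [hpq, hpr]), Finset.sum_insert (by simp [hqr]),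
        Finset.sum_singleton]
      have hφp : φ (i, a i) = Finsupp.single (i, a i) 1 := by
        simp only [hφ]; rw [if_neg (hac i)]
      have hφq : φ (i, b i) = Finsupp.single (i, b i) 1 := by
        simp only [hφ]; rw [if_neg (hbc i)]
      have hφr : φ (i, c i) = Finsupp.single (i, a i) 1 + Finsupp.single (i, b i) 1 := by
        simp [hφ]
      show (if ((i, a i) : ι × β) = (i, c i) then (-1 : ℝ) else 1) • φ (i, a i)
          + ((if ((i, b i) : ι × β) = (i, c i) then (-1 : ℝ) else 1) • φ (i, b i)
          + (if ((i, c i) : ι × β) = (i, c i) then (-1 : ℝ) else 1) • φ (i, c i)) = 0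
      rw [if_neg h1, if_neg h2, if_pos rfl, hφp, hφq, hφr]
      module

/-- The direct sum of `k-1` three-point lines is a rank-`(2k-2)` real-representable matroid
with no elementary rank-`k` flat: the bound `2k-1` is best possible. -/
theorem three_point_lines_sum {α : Type*} (k : ℕ) (hk : 2 ≤ k)
    (L : Fin (k - 1) → Matroid α) (hL : ∀ i, IsThreePointLine (L i)) :
    rank (Matroid.sum' L) = 2 * k - 2 ∧ Representable ℝ (Matroid.sum' L) ∧
      ¬ ∃ F, ElementaryFlat (Matroid.sum' L) k F := by
  classical
  have hEfin : (Matroid.sum' L).E.Finite := by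
    rw [Matroid.sum'_ground_eq]
    exact Set.finite_iUnion fun i => (tpl_ground_finite (hL i)).image _
  refine ⟨?_, rep_aux L hL, ?_⟩
  · -- rank computation
    choose B hB using fun i => (L i).exists_isBase
    have hBfin : ∀ i, (B i).Finite := fun i =>
      (tpl_ground_finite (hL i)).subset (hB i).subset_ground
    have hbase : (Matroid.sum' L).IsBase (⋃ i, Prod.mk i '' B i) := by
      rw [Matroid.sum'_isBase_iff]
      intro i
      rw [preimage_mk_iUnion_image]
      exact hB i
    have h1 : rank (Matroid.sum' L) = (⋃ i, Prod.mk i '' B i).ncard :=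
      rk_eq_ncard_of_basis' hEfin hbase.isBasis_ground.isBasis'
    rw [h1, ncard_iUnion_image_mk B hBfin]
    have : ∀ i, (B i).ncard = 2 := fun i => tpl_base_ncard (hL i) (hB i)
    rw [Finset.sum_congr rfl fun i _ => this i, Finset.sum_const, Finset.card_univ,
      Fintype.card_fin, smul_eq_mul]
    omega
  · -- no elementary rank-k flat
    rintro ⟨F, ⟨⟨hFflat, hFrk⟩, hFcard⟩⟩
    have hFE : F ⊆ (Matroid.sum' L).E := hFflat.subset_ground
    have hFfin : F.Finite := hEfin.subset hFE
    obtain ⟨J, hJ⟩ := (Matroid.sum' L).exists_isBasis' F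
    have hJcard : J.ncard = k := by rw [← rk_eq_ncard_of_basis' hFfin hJ, hFrk]
    have hJF : J = F := Set.eq_of_subset_of_ncard_le hJ.subset (by omega) hFfin
    have hFind : (Matroid.sum' L).Indep F := hJF ▸ hJ.indep
    -- pigeonhole: two elements of F in the same block
    have hcard_lt : (Finset.univ : Finset (Fin (k - 1))).card < hFfin.toFinset.card := by
      rw [Finset.card_univ, Fintype.card_fin, ← Set.ncard_eq_toFinset_card _ hFfin, hFcard]
      omega
    obtain ⟨x, hx, y, hy, hxy, hxy1⟩ := Finset.exists_ne_map_eq_of_card_lt_of_maps_to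
      hcard_lt (fun z _ => Finset.mem_univ z.1)
    rw [Set.Finite.mem_toFinset] at hx hy
    set i := x.1 with hidef
    have hyx : y.1 = i := hxy1.symm
    have hne2 : x.2 ≠ y.2 := by
      intro h
      exact hxy (Prod.ext hxy1 h)
    -- F_i contains two distinct elements, so it is a base of L i
    have hFiind : (L i).Indep (Prod.mk i ⁻¹' F) := (Matroid.sum'_indep_iff.mp hFind) i
    have hx2 : x.2 ∈ Prod.mk i ⁻¹' F := by
      show (i, x.2) ∈ F
      rwa [hidef, Prod.mk.eta]
    have hy2 : y.2 ∈ Prod.mk i ⁻¹' F := by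
      show (i, y.2) ∈ F
      rw [← hyx, Prod.mk.eta]; exact hy
    have hpair : ({x.2, y.2} : Set α) ⊆ Prod.mk i ⁻¹' F := by
      rintro t (rfl | rfl) <;> assumption
    have hpair_ind : (L i).Indep {x.2, y.2} := hFiind.subset hpair
    have hpair_base : (L i).IsBase {x.2, y.2} :=
      tpl_base_of_indep_ncard_two (hL i) hpair_ind (Set.ncard_pair hne2)
    have hFi_base : (L i).IsBase (Prod.mk i ⁻¹' F) := by
      rwa [← hpair_base.eq_of_subset_indep hFiind hpair]
    -- F is a basis of F ∪ block i
    have hXsub : F ⊆ F ∪ Prod.mk i '' (L i).E := Set.subset_union_left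
    have hbasisX : (Matroid.sum' L).IsBasis F (F ∪ Prod.mk i '' (L i).E) := by
      rw [Matroid.sum'_isBasis_iff]
      intro j
      rw [Set.preimage_union]
      by_cases hj : j = i
      · subst hj
        have hinj : Function.Injective (Prod.mk i : α → Fin (k - 1) × α) :=
          fun u v h => congrArg Prod.snd h
        have himg : Prod.mk i ⁻¹' (Prod.mk i '' (L i).E) = (L i).E :=
          Set.preimage_image_eq _ hinj
        rw [himg, Set.union_eq_self_of_subset_left hFi_base.subset_ground]
        exact Matroid.isBasis_ground_iff.mpr hFi_base
      · have himg : Prod.mk j ⁻¹' (Prod.mk i '' (L i).E) = ∅ := by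
          ext t
          simp only [Set.mem_preimage, Set.mem_image, Prod.mk.injEq, Set.mem_empty_iff_false,
            iff_false]
          rintro ⟨u, hu, rfl, rfl⟩
          exact hj rfl
        rw [himg, Set.union_empty]
        exact ((Matroid.sum'_indep_iff.mp hFind) j).isBasis_self
    have hsubF : F ∪ Prod.mk i '' (L i).E ⊆ F :=
      hFflat.subset_of_isBasis_of_isBasis hFind.isBasis_self hbasisX
    have hEi_sub : (L i).E ⊆ Prod.mk i ⁻¹' F := by
      intro t ht
      exact (hsubF (Set.mem_union_right _ ⟨t, ht, rfl⟩) : (i, t) ∈ F)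
    have h3 : 3 ≤ (Prod.mk i ⁻¹' F).ncard := by
      rw [← (hL i).1]
      have hinj : Function.Injective (Prod.mk i : α → Fin (k - 1) × α) :=
        fun u v h => congrArg Prod.snd h
      exact Set.ncard_le_ncard hEi_sub (hFfin.preimage hinj.injOn)
    have := tpl_indep_ncard_le_two (hL i) hFiind
    omega


end SG
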